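/- Let D ∈ L(K,H) with ‖D‖ = 1, and let γ(t) = Th(tD). Then γ is differentiable and satisfies the differential equation γ'(t) = D - γ(t) D* γ(t). -/

import Mathlib

set_option maxHeartbeats 1000000

open ContinuousLinearMap

section ScalarLemmas

lemma tanh_abs_le_one (x : ℝ) : |Real.tanh x| ≤ 1 := by
  rw [Real.tanh_eq_sinh_div_cosh, abs_div, div_le_one (by positivity : (0:ℝ) < |Real.cosh x|)]
  nlinarith [Real.cosh_sq_sub_sinh_sq x, abs_nonneg (Real.sinh x), abs_nonneg (Real.cosh x),
    sq_abs (Real.sinh x), sq_abs (Real.cosh x)]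

lemma hasDerivAt_tanh (x : ℝ) : HasDerivAt Real.tanh (1 - Real.tanh x ^ 2) x := by
  have h1 : HasDerivAt Real.sinh (Real.cosh x) x := Real.hasDerivAt_sinh x
  have h2 : HasDerivAt Real.cosh (Real.sinh x) x := Real.hasDerivAt_cosh x
  have hc : Real.cosh x ≠ 0 := (Real.cosh_pos x).ne'
  have hd := h1.div h2 hc
  have heq : (Real.cosh x * Real.cosh x - Real.sinh x * Real.sinh x) / Real.cosh x ^ 2
      = 1 - Real.tanh x ^ 2 := by
    rw [Real.tanh_eq_sinh_div_cosh, div_pow, eq_sub_iff_add_eq, ← add_div,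
      div_eq_one_iff_eq (by positivity)]
    nlinarith [Real.cosh_sq_sub_sinh_sq x]
  rw [heq] at hd
  exact hd.congr_of_eventuallyEq
    (Filter.Eventually.of_forall fun y => (Real.tanh_eq_sinh_div_cosh y))

lemma hasDerivAt_tanh_mul (x t : ℝ) :
    HasDerivAt (fun s : ℝ => Real.tanh (s * x)) (x * (1 - Real.tanh (t * x) ^ 2)) t := by
  have := (hasDerivAt_tanh (t * x)).comp t ((hasDerivAt_id t).mul_const x)
  simpa [mul_comm, Function.comp_def] using this

lemma one_sub_tanh_sq_abs_le_one (y : ℝ) : |1 - Real.tanh y ^ 2| ≤ 1 := by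
  have h := tanh_abs_le_one y
  rw [abs_le] at h ⊢
  constructor <;> nlinarith [sq_nonneg (Real.tanh y)]

lemma tanh_lipschitz (a b : ℝ) : |Real.tanh a - Real.tanh b| ≤ |a - b| := by
  have := Convex.norm_image_sub_le_of_norm_hasDerivWithin_le
    (f := Real.tanh) (f' := fun y => 1 - Real.tanh y ^ 2) (C := 1) (s := Set.univ)
    (fun y _ => (hasDerivAt_tanh y).hasDerivWithinAt)
    (fun y _ => by simpa using one_sub_tanh_sq_abs_le_one y)
    convex_univ (Set.mem_univ b) (Set.mem_univ a)
  simpa using this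

lemma key_est (x t h : ℝ) (hx : |x| ≤ 1) :
    |Real.tanh ((t + h) * x) - Real.tanh (t * x) - h * (x * (1 - Real.tanh (t * x) ^ 2))|
      ≤ 2 * h ^ 2 := by
  set φ : ℝ → ℝ := fun s => Real.tanh (s * x) - s * (x * (1 - Real.tanh (t * x) ^ 2)) with hφ
  have hderiv : ∀ s, HasDerivAt φ
      (x * (1 - Real.tanh (s * x) ^ 2) - x * (1 - Real.tanh (t * x) ^ 2)) s := by
    intro s
    have h2 : HasDerivAt (fun s : ℝ => s * (x * (1 - Real.tanh (t * x) ^ 2)))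
        (x * (1 - Real.tanh (t * x) ^ 2)) s := by
      simpa using (hasDerivAt_id s).mul_const (x * (1 - Real.tanh (t * x) ^ 2))
    exact (hasDerivAt_tanh_mul x s).sub h2
  have hbound : ∀ s ∈ Set.uIcc t (t + h),
      |x * (1 - Real.tanh (s * x) ^ 2) - x * (1 - Real.tanh (t * x) ^ 2)| ≤ 2 * |h| := by
    intro s hs
    have hst : |s - t| ≤ |h| := by
      rw [Set.mem_uIcc] at hs
      rw [abs_le]
      rcases hs with ⟨h1, h2⟩ | ⟨h1, h2⟩ <;> constructor <;>
        nlinarith [neg_abs_le h, le_abs_self h]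
    have e1 : x * (1 - Real.tanh (s * x) ^ 2) - x * (1 - Real.tanh (t * x) ^ 2)
        = x * ((Real.tanh (t * x) - Real.tanh (s * x))
            * (Real.tanh (t * x) + Real.tanh (s * x))) := by
      ring
    rw [e1, abs_mul, abs_mul]
    have l1 : |Real.tanh (t * x) - Real.tanh (s * x)| ≤ |h| := by
      calc _ ≤ |t * x - s * x| := tanh_lipschitz _ _
        _ = |t - s| * |x| := by rw [← abs_mul]; ring_nf
        _ ≤ |h| * 1 := by
            apply mul_le_mul _ hx (abs_nonneg x) (abs_nonneg h)
            rwa [abs_sub_comm]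
        _ = |h| := mul_one _
    have l2 : |Real.tanh (t * x) + Real.tanh (s * x)| ≤ 2 := by
      calc _ ≤ |Real.tanh (t * x)| + |Real.tanh (s * x)| := abs_add_le _ _
        _ ≤ 1 + 1 := add_le_add (tanh_abs_le_one _) (tanh_abs_le_one _)
        _ = 2 := by norm_num
    calc |x| * (|Real.tanh (t * x) - Real.tanh (s * x)|
            * |Real.tanh (t * x) + Real.tanh (s * x)|)
        ≤ 1 * (|h| * 2) := by
          apply mul_le_mul hx _ (by positivity) zero_le_one
          exact mul_le_mul l1 l2 (abs_nonneg _) (abs_nonneg _)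
      _ = 2 * |h| := by ring
  have hmvt := Convex.norm_image_sub_le_of_norm_hasDerivWithin_le
    (f := φ) (f' := fun s => x * (1 - Real.tanh (s * x) ^ 2) - x * (1 - Real.tanh (t * x) ^ 2))
    (C := 2 * |h|) (s := Set.uIcc t (t + h))
    (fun s _ => (hderiv s).hasDerivWithinAt)
    (fun s hs => by simpa using hbound s hs)
    (convex_uIcc t (t + h))
    Set.left_mem_uIcc Set.right_mem_uIcc
  have e2 : φ (t + h) - φ t
      = Real.tanh ((t + h) * x) - Real.tanh (t * x) - h * (x * (1 - Real.tanh (t * x) ^ 2)) := by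
    simp only [hφ]; ring
  rw [e2, Real.norm_eq_abs, Real.norm_eq_abs] at hmvt
  calc _ ≤ 2 * |h| * |t + h - t| := hmvt
    _ = 2 * h ^ 2 := by
        rw [add_sub_cancel_left, mul_assoc, ← abs_mul,
          abs_of_nonneg (mul_self_nonneg h), ← sq]

end ScalarLemmas

section OperatorLemmas

lemma spectrum_abs_le {K : Type*} [NormedAddCommGroup K] [InnerProductSpace ℂ K]
    [CompleteSpace K] (A : K →L[ℂ] K) (hnorm : ‖A‖ ≤ 1) (x : ℝ)
    (hx : x ∈ spectrum ℝ A) : |x| ≤ 1 := by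
  cases subsingleton_or_nontrivial K
  · simp [spectrum, Set.eq_empty_iff_forall_notMem] at hx
  · calc |x| = ‖x‖ := rfl
      _ ≤ ‖A‖ := spectrum.norm_le_norm_of_mem hx
      _ ≤ 1 := hnorm

lemma cfc_tanh_hasDerivAt' {K : Type*} [NormedAddCommGroup K] [InnerProductSpace ℂ K]
    [CompleteSpace K] (A : K →L[ℂ] K) (hA : IsSelfAdjoint A) (hnorm : ‖A‖ ≤ 1) (t : ℝ) :
    HasDerivAt (fun s : ℝ => cfc (fun x : ℝ => Real.tanh (s * x)) A)
      (cfc (fun x : ℝ => x * (1 - Real.tanh (t * x) ^ 2)) A) t := by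
  have htanh_cont : Continuous Real.tanh :=
    continuous_iff_continuousAt.mpr fun y => (hasDerivAt_tanh y).continuousAt
  have hcont : ∀ s : ℝ, Continuous (fun x : ℝ => Real.tanh (s * x)) := fun s =>
    htanh_cont.comp (continuous_const.mul continuous_id)
  have hcont' : Continuous (fun x : ℝ => x * (1 - Real.tanh (t * x) ^ 2)) :=
    continuous_id.mul (continuous_const.sub ((hcont t).pow 2))
  rw [hasDerivAt_iff_isLittleO_nhds_zero, Asymptotics.isLittleO_iff]
  intro c hc
  have hev : ∀ᶠ h in nhds (0:ℝ), |h| < c/2 := by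
    have := eventually_abs_sub_lt (0:ℝ) (by positivity : (0:ℝ) < c/2)
    simpa using this
  filter_upwards [hev] with h hh
  have key : cfc (fun x : ℝ => Real.tanh ((t + h) * x)) A
      - cfc (fun x : ℝ => Real.tanh (t * x)) A
      - h • cfc (fun x : ℝ => x * (1 - Real.tanh (t * x) ^ 2)) A
      = cfc (fun x : ℝ => Real.tanh ((t + h) * x) - Real.tanh (t * x)
          - h * (x * (1 - Real.tanh (t * x) ^ 2))) A := by
    rw [← cfc_smul h _ A hcont'.continuousOn,
      ← cfc_sub _ _ A ((hcont (t+h)).continuousOn) ((hcont t).continuousOn),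
      ← cfc_sub (fun x : ℝ => Real.tanh ((t + h) * x) - Real.tanh (t * x))
        (fun x : ℝ => h • (x * (1 - Real.tanh (t * x) ^ 2))) A
        (((hcont (t+h)).sub (hcont t)).continuousOn)
        ((continuous_const.smul hcont' (f := fun _ : ℝ => h)).continuousOn)]
    simp only [smul_eq_mul]
  simp only [key]
  have hb : ‖cfc (fun x : ℝ => Real.tanh ((t + h) * x) - Real.tanh (t * x)
      - h * (x * (1 - Real.tanh (t * x) ^ 2))) A‖ ≤ 2 * h ^ 2 := by
    apply norm_cfc_le (by positivity)
    intro x hx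
    rw [Real.norm_eq_abs]
    exact key_est x t h (spectrum_abs_le A hnorm x hx)
  calc _ ≤ 2 * h ^ 2 := hb
    _ = 2 * |h| * |h| := by rw [mul_assoc, ← abs_mul, abs_of_nonneg (mul_self_nonneg h), sq]
    _ ≤ 2 * (c/2) * |h| := by
        apply mul_le_mul_of_nonneg_right _ (abs_nonneg h)
        exact mul_le_mul_of_nonneg_left hh.le (by norm_num)
    _ = c * ‖h‖ := by rw [Real.norm_eq_abs]; ring

lemma cfc_mul_id {K : Type*} [NormedAddCommGroup K] [InnerProductSpace ℂ K]
    [CompleteSpace K] (A : K →L[ℂ] K) (hA : IsSelfAdjoint A) (g : ℝ → ℝ) (hg : Continuous g) :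
    cfc (fun x : ℝ => x * g x) A = A ∘L cfc g A := by
  rw [cfc_mul (fun x : ℝ => x) g A (continuous_id'.continuousOn) hg.continuousOn, cfc_id' ℝ A]
  rfl

end OperatorLemmas

variable {K H : Type*}
  [NormedAddCommGroup H] [InnerProductSpace ℂ H] [CompleteSpace H]
  [NormedAddCommGroup K] [InnerProductSpace ℂ K] [CompleteSpace K]

/-- The square root of a (positive) operator, via continuous functional calculus. -/
noncomputable def opSqrt {E : Type*} [NormedAddCommGroup E] [InnerProductSpace ℂ E]
    [CompleteSpace E] (T : E →L[ℂ] E) : E →L[ℂ] E := cfc Real.sqrt T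

/-- The inverse square root of a (positive invertible) operator. -/
noncomputable def opInvSqrt {E : Type*} [NormedAddCommGroup E] [InnerProductSpace ℂ E]
    [CompleteSpace E] (T : E →L[ℂ] E) : E →L[ℂ] E := cfc (fun x : ℝ => (Real.sqrt x)⁻¹) T

/-- The absolute value |D| = (D*D)^{1/2} of an operator D : K → H. -/
noncomputable def absOp (D : K →L[ℂ] H) : K →L[ℂ] K := opSqrt (adjoint D ∘L D)

/-- The curve γ(t) = Th(tD) = J tanh(t|D|) is differentiable and satisfies
γ'(t) = D - γ(t) D* γ(t). -/
theorem thOp_hasDerivAt (D J : K →L[ℂ] H) (hD : ‖D‖ = 1)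
    (hpolar : D = J ∘L absOp D)
    (hJ1 : adjoint J ∘L J ∘L absOp D = absOp D)
    (hJ2 : absOp D ∘L (adjoint J ∘L J) = absOp D) :
    ∀ t : ℝ,
      HasDerivAt (fun s : ℝ => J ∘L cfc (fun x : ℝ => Real.tanh (s * x)) (absOp D))
        (D - (J ∘L cfc (fun x : ℝ => Real.tanh (t * x)) (absOp D)) ∘L adjoint D ∘L
          (J ∘L cfc (fun x : ℝ => Real.tanh (t * x)) (absOp D))) t := by
  intro t
  set A := absOp D with hAdef
  have htanh_cont : Continuous Real.tanh :=
    continuous_iff_continuousAt.mpr fun y => (hasDerivAt_tanh y).continuousAt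
  have hcontT : Continuous (fun x : ℝ => Real.tanh (t * x)) :=
    htanh_cont.comp (continuous_const.mul continuous_id)
  have hsa : IsSelfAdjoint (adjoint D ∘L D) := by
    rw [IsSelfAdjoint, star_eq_adjoint, adjoint_comp, adjoint_adjoint]
  have hAsa : IsSelfAdjoint A := by
    rw [hAdef]; unfold absOp opSqrt
    exact cfc_predicate Real.sqrt _
  have hAnorm : ‖A‖ ≤ 1 := by
    apply norm_cfc_le zero_le_one
    intro x hx
    have hx1 : |x| ≤ 1 := spectrum_abs_le _
      (by rw [norm_adjoint_comp_self, hD]; norm_num) x hx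
    rw [Real.norm_eq_abs, abs_of_nonneg (Real.sqrt_nonneg x)]
    exact Real.sqrt_le_one.mpr (le_trans (le_abs_self x) hx1)
  have hd := cfc_tanh_hasDerivAt' A hAsa hAnorm t
  set T := cfc (fun x : ℝ => Real.tanh (t * x)) A with hTdef
  -- adjoint of D
  have hadjA : adjoint A = A := (star_eq_adjoint A).symm.trans hAsa
  have hadjD : adjoint D = A ∘L adjoint J := by
    rw [hpolar, adjoint_comp, hadjA]
  -- γ D* γ computation
  have hmid : ∀ v : K, A (adjoint J (J (T v))) = A (T v) := by
    intro v
    have := DFunLike.congr_fun hJ2 (T v)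
    simpa using this
  have e : (J ∘L T) ∘L adjoint D ∘L (J ∘L T)
      = J ∘L cfc (fun x : ℝ => Real.tanh (t * x) * (x * Real.tanh (t * x))) A := by
    have hTAT : T ∘L (A ∘L T)
        = cfc (fun x : ℝ => Real.tanh (t * x) * (x * Real.tanh (t * x))) A := by
      rw [cfc_mul (fun x : ℝ => Real.tanh (t * x)) (fun x : ℝ => x * Real.tanh (t * x)) A
        hcontT.continuousOn ((continuous_id'.mul hcontT).continuousOn),
        cfc_mul_id A hAsa _ hcontT]
      rfl
    rw [← hTAT, hadjD]
    ext v
    simp only [comp_apply]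
    rw [hmid v]
  -- derivative value identity
  have ederiv : D - (J ∘L T) ∘L adjoint D ∘L (J ∘L T)
      = J ∘L cfc (fun x : ℝ => x * (1 - Real.tanh (t * x) ^ 2)) A := by
    rw [e]
    nth_rewrite 1 [hpolar]
    rw [← comp_sub]
    congr 1
    have h1 : cfc (fun x : ℝ => x * (1 - Real.tanh (t * x) ^ 2)) A
        = cfc (fun x : ℝ => x - Real.tanh (t * x) * (x * Real.tanh (t * x))) A := by
      apply cfc_congr
      intro x _
      ring
    rw [h1, cfc_sub (fun x : ℝ => x) (fun x : ℝ => Real.tanh (t * x) * (x * Real.tanh (t * x)))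
      A (continuous_id'.continuousOn)
      ((hcontT.mul (continuous_id'.mul hcontT)).continuousOn), cfc_id' ℝ A]
  rw [ederiv]
  have hfinal := HasFDerivAt.comp_hasDerivAt t
    (((ContinuousLinearMap.compL ℂ K K H J).restrictScalars ℝ).hasFDerivAt
      (x := cfc (fun x : ℝ => Real.tanh (t * x)) A)) hd
  exact hfinal
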